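/- For x, y > 1, one has F̃(G(x,y)) = F(x,y), where F(x,y) = xy/(x+y-1), F̃(x) = x²/(2x-1), and G(x,y) = (xy + sqrt(x(x-1)y(y-1)))/(x+y-1). -/

import Mathlib

/-- For x, y > 1, F̃(G(x,y)) = F(x,y). -/
theorem Ftilde_G_eq_F (x y : ℝ) (hx : 1 < x) (hy : 1 < y) :
    ((x * y + Real.sqrt (x * (x - 1) * y * (y - 1))) / (x + y - 1)) ^ 2 /
      (2 * ((x * y + Real.sqrt (x * (x - 1) * y * (y - 1))) / (x + y - 1)) - 1)
    = x * y / (x + y - 1) := by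
  set s := Real.sqrt (x * (x - 1) * y * (y - 1)) with hs
  have hs0 : 0 ≤ s := Real.sqrt_nonneg _
  have hsq : s ^ 2 = x * (x - 1) * y * (y - 1) := by
    rw [hs, sq, Real.mul_self_sqrt (le_of_lt (mul_pos (mul_pos (mul_pos (lt_trans zero_lt_one hx) (sub_pos.2 hx)) (lt_trans zero_lt_one hy)) (sub_pos.2 hy)))]
  have hd : (0:ℝ) < x + y - 1 := by linarith
  have hnum : 0 < 2 * (x * y + s) - (x + y - 1) := by nlinarith
  have hden : 2 * ((x * y + s) / (x + y - 1)) - 1 ≠ 0 := by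
    rw [sub_ne_zero]
    intro h
    have : 2 * (x * y + s) = x + y - 1 := by
      field_simp at h; linarith
    linarith
  field_simp
  rw [div_eq_iff (show (0:ℝ) < (x * y + s) * 2 - (x + y - 1) by linarith).ne']
  nlinarith [hsq, hd, hnum, sq_nonneg (x*y+s)]
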